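/- Let n ≥ 2 and let φ_λ : ℝⁿ × ℝ → ℝⁿ, λ ∈ [0,1], be a coercive family of dissipative flows. Let K_0 be the global attractor of φ_0 and let (K_λ)_{λ∈[0,λ₁]} be a continuation of K_0 such that each K_λ with λ ∈ (0,λ₁] is an attractor of φ_λ. Then there exists λ₀ > 0 such that for every λ with 0 < λ < λ₀ the set C_λ = ℝⁿ ∖ (A_λ(K_λ) ∪ R_λ), where R_λ = {x ∈ ℝⁿ : ‖φ_λ(x,t)‖ → ∞ as t → −∞}, is a nonempty isolated invariant compactum of φ_λ contained in ℝⁿ ∖ K_λ, the complement ℝⁿ ∖ C_λ has exactly two connected components, one bounded and one unbounded, and K_λ lies in the bounded component (which equals A_λ(K_λ)). -/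

import Mathlib

open Set Metric Filter Topology Bornology

set_option linter.unusedSectionVars false
set_option maxHeartbeats 1000000

section Defs

variable {M : Type*} [TopologicalSpace M]

/-- A (continuous) flow on a topological space. -/
def IsFlow (φ : M → ℝ → M) : Prop :=
  Continuous (fun p : M × ℝ => φ p.1 p.2) ∧
    (∀ x, φ x 0 = x) ∧ ∀ x s t, φ (φ x s) t = φ x (s + t)

/-- A set `S` is invariant for the flow `φ` if `φ(S,t) = S` for every `t`. -/
def FlowInvariant (φ : M → ℝ → M) (S : Set M) : Prop :=
  ∀ t : ℝ, (fun x => φ x t) '' S = S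

/-- The omega-limit set `ω(x) = ⋂_{t>0} cl (φ(x,[t,∞)))`. -/
def omegaLimitSet (φ : M → ℝ → M) (x : M) : Set M :=
  ⋂ t ∈ Ioi (0 : ℝ), closure (φ x '' Ici t)

/-- The negative omega-limit set `ω*(x) = ⋂_{t<0} cl (φ(x,(-∞,t]))`. -/
def negOmegaLimitSet (φ : M → ℝ → M) (x : M) : Set M :=
  ⋂ t ∈ Iio (0 : ℝ), closure (φ x '' Iic t)

/-- A flow is dissipative if every omega-limit set is nonempty and the closure of the
union of all omega-limit sets is compact. -/
def Dissipative (φ : M → ℝ → M) : Prop :=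
  (∀ x, (omegaLimitSet φ x).Nonempty) ∧
    IsCompact (closure (⋃ x, omegaLimitSet φ x))

/-- `K` is stable: every neighborhood `U` of `K` contains a neighborhood `V` of `K`
with `φ(V,[0,∞)) ⊆ U`. -/
def FlowStable (φ : M → ℝ → M) (K : Set M) : Prop :=
  ∀ U ∈ nhdsSet K, ∃ V ∈ nhdsSet K, ∀ x ∈ V, ∀ t : ℝ, 0 ≤ t → φ x t ∈ U

/-- `K` is negatively stable: every neighborhood `U` of `K` contains a neighborhood `V`
of `K` with `φ(V,(-∞,0]) ⊆ U`. -/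
def FlowNegStable (φ : M → ℝ → M) (K : Set M) : Prop :=
  ∀ U ∈ nhdsSet K, ∃ V ∈ nhdsSet K, ∀ x ∈ V, ∀ t : ℝ, t ≤ 0 → φ x t ∈ U

/-- The region of attraction `A(K) = {x : ∅ ≠ ω(x) ⊆ K}`. -/
def attractionRegion (φ : M → ℝ → M) (K : Set M) : Set M :=
  {x | (omegaLimitSet φ x).Nonempty ∧ omegaLimitSet φ x ⊆ K}

/-- The region of repulsion `R(K) = {x : ∅ ≠ ω*(x) ⊆ K}`. -/
def repulsionRegion (φ : M → ℝ → M) (K : Set M) : Set M :=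
  {x | (negOmegaLimitSet φ x).Nonempty ∧ negOmegaLimitSet φ x ⊆ K}

/-- An attractor: a compact invariant stable set which is attracting, i.e. its region of
attraction is a neighborhood of it. -/
def IsAttractor (φ : M → ℝ → M) (K : Set M) : Prop :=
  IsCompact K ∧ FlowInvariant φ K ∧ FlowStable φ K ∧
    attractionRegion φ K ∈ nhdsSet K

/-- A repeller: a compact invariant negatively stable set which is repelling. -/
def IsRepeller (φ : M → ℝ → M) (K : Set M) : Prop :=
  IsCompact K ∧ FlowInvariant φ K ∧ FlowNegStable φ K ∧
    repulsionRegion φ K ∈ nhdsSet K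

/-- A global attractor: a compact invariant stable set whose region of attraction is the
whole space. -/
def IsGlobalAttractor (φ : M → ℝ → M) (K : Set M) : Prop :=
  IsCompact K ∧ FlowInvariant φ K ∧ FlowStable φ K ∧
    attractionRegion φ K = univ

/-- `N` is an isolating neighborhood of `K`: a compact neighborhood of `K` such that `K`
is the maximal invariant set contained in `N`. -/
def IsIsolatingNbhd (φ : M → ℝ → M) (N K : Set M) : Prop :=
  IsCompact N ∧ K ⊆ interior N ∧ FlowInvariant φ K ∧
    ∀ S : Set M, FlowInvariant φ S → S ⊆ N → S ⊆ K

/-- An isolated invariant set: a compact invariant set having an isolating neighborhood. -/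
def IsIsolatedInvariant (φ : M → ℝ → M) (K : Set M) : Prop :=
  IsCompact K ∧ FlowInvariant φ K ∧ ∃ N, IsIsolatingNbhd φ N K

/-- A parametrized family of flows `(φ_λ)_{λ ∈ [0,1]}`: jointly continuous on
`[0,1] × M × ℝ` and each `φ_λ` is a flow. -/
def IsParamFlow (φ : ℝ → M → ℝ → M) : Prop :=
  ContinuousOn (fun p : ℝ × M × ℝ => φ p.1 p.2.1 p.2.2)
      ((Icc 0 1 : Set ℝ) ×ˢ (univ : Set (M × ℝ))) ∧
    ∀ l ∈ Icc (0 : ℝ) 1, IsFlow (φ l)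

/-- `(K_λ)_{λ ∈ J}` is a continuation: each `K_λ` is an isolated invariant set of `φ_λ`
and every isolating neighborhood of `K_{λ₀}` remains an isolating neighborhood of `K_λ`
for `λ` near `λ₀` in `J`. -/
def IsContinuation (φ : ℝ → M → ℝ → M) (J : Set ℝ) (K : ℝ → Set M) : Prop :=
  (∀ l ∈ J, IsIsolatedInvariant (φ l) (K l)) ∧
    ∀ l₀ ∈ J, ∀ N : Set M, IsIsolatingNbhd (φ l₀) N (K l₀) →
      ∃ δ > 0, ∀ l ∈ J, |l - l₀| < δ → IsIsolatingNbhd (φ l) N (K l)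

/-- The family `(φ_λ)` is uniformly dissipative. -/
def UniformlyDissipative (φ : ℝ → M → ℝ → M) : Prop :=
  (∀ l ∈ Icc (0 : ℝ) 1, ∀ x, (omegaLimitSet (φ l) x).Nonempty) ∧
    IsCompact (closure (⋃ l ∈ Icc (0 : ℝ) 1, ⋃ x, omegaLimitSet (φ l) x))

end Defs

section NormedDefs

variable {E : Type*} [NormedAddCommGroup E]

/-- A coercive family of dissipative flows: for every continuation of the global
attractor of `φ₀`, the regions of attraction are bounded for all small `λ > 0`. -/
def CoerciveFamily (φ : ℝ → E → ℝ → E) : Prop :=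
  ∀ lam1 ∈ Ioc (0 : ℝ) 1, ∀ K : ℝ → Set E,
    IsContinuation φ (Icc 0 lam1) K → IsGlobalAttractor (φ 0) (K 0) →
      ∃ lam0, 0 < lam0 ∧ lam0 ≤ lam1 ∧ ∀ l, 0 < l → l < lam0 →
        IsBounded (attractionRegion (φ l) (K l))

/-- A polar family of dissipative flows: it has arbitrarily large bounded trajectories. -/
def PolarFamily (φ : ℝ → E → ℝ → E) : Prop :=
  ∀ L > 0, ∃ lam0 > 0, ∀ l, 0 < l → l < lam0 → l ≤ 1 →
    ∃ x : E, IsBounded (range (φ l x)) ∧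
      ∃ tl < (0 : ℝ), ∀ t < tl, L < ‖φ l x t‖

/-- The set of points whose trajectory tends to infinity in negative time
(the region of repulsion of the point at infinity). -/
def escapeRegion (φ : ℝ → E → ℝ → E) (l : ℝ) : Set E :=
  {x | Tendsto (fun t => ‖φ l x t‖) atBot atTop}

/-- The complementary isolated invariant set
`C_λ = ℝⁿ ∖ (A_λ(K_λ) ∪ R_λ(∞))`. -/
def complementarySet (φ : ℝ → E → ℝ → E) (K : ℝ → Set E) (l : ℝ) : Set E :=
  (attractionRegion (φ l) (K l) ∪ escapeRegion φ l)ᶜ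

end NormedDefs

namespace FlowAux

variable {E : Type*} [NormedAddCommGroup E] [NormedSpace ℝ E] [ProperSpace E]
variable {ψ : E → ℝ → E} (hψ : IsFlow ψ)

section Basic
include hψ

theorem cont_t (t : ℝ) : Continuous (fun x => ψ x t) :=
  hψ.1.comp (continuous_id.prodMk continuous_const)

theorem cont_x (x : E) : Continuous (ψ x) :=
  hψ.1.comp (continuous_const.prodMk continuous_id)

theorem cancel (x : E) (t : ℝ) : ψ (ψ x t) (-t) = x := by
  rw [hψ.2.2, add_neg_cancel, hψ.2.1]

theorem cancel' (x : E) (t : ℝ) : ψ (ψ x (-t)) t = x := by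
  rw [hψ.2.2, neg_add_cancel, hψ.2.1]

theorem bij (t : ℝ) : Function.Bijective (fun x => ψ x t) := by
  constructor
  · intro a b h
    have := congrArg (fun z => ψ z (-t)) h
    simpa [cancel hψ] using this
  · intro y
    exact ⟨ψ y (-t), cancel' hψ y t⟩

theorem tail_image (x : E) (s t : ℝ) :
    (fun y => ψ y s) '' (ψ x '' Ici t) = ψ x '' Ici (t + s) := by
  ext z
  simp only [Set.mem_image, Set.mem_Ici]
  constructor
  · rintro ⟨y, ⟨u, hu, rfl⟩, rfl⟩
    exact ⟨u + s, by linarith, (hψ.2.2 x u s).symm⟩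
  · rintro ⟨u, hu, rfl⟩
    exact ⟨ψ x (u - s), ⟨u - s, by linarith, rfl⟩, by rw [hψ.2.2, sub_add_cancel]⟩

theorem tail_image_neg (x : E) (s t : ℝ) :
    (fun y => ψ y s) '' (ψ x '' Iic t) = ψ x '' Iic (t + s) := by
  ext z
  simp only [Set.mem_image, Set.mem_Iic]
  constructor
  · rintro ⟨y, ⟨u, hu, rfl⟩, rfl⟩
    exact ⟨u + s, by linarith, (hψ.2.2 x u s).symm⟩
  · rintro ⟨u, hu, rfl⟩
    exact ⟨ψ x (u - s), ⟨u - s, by linarith, rfl⟩, by rw [hψ.2.2, sub_add_cancel]⟩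

end Basic

section Omega
include hψ

theorem omega_subset_tail (x : E) {t : ℝ} (ht : 0 < t) :
    omegaLimitSet ψ x ⊆ closure (ψ x '' Ici t) :=
  Set.biInter_subset_of_mem ht

theorem negOmega_subset_tail (x : E) {t : ℝ} (ht : t < 0) :
    negOmegaLimitSet ψ x ⊆ closure (ψ x '' Iic t) :=
  Set.biInter_subset_of_mem ht

omit hψ in
theorem omega_exists_enter (x : E) {U : Set E} (hU : IsOpen U)
    (hne : (omegaLimitSet ψ x).Nonempty) (hsub : omegaLimitSet ψ x ⊆ U) :
    ∃ t : ℝ, 0 < t ∧ ψ x t ∈ U := by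
  by_contra h
  push_neg at h
  have h1 : ψ x '' Ici 1 ⊆ Uᶜ := by
    rintro z ⟨u, hu, rfl⟩
    exact h u (lt_of_lt_of_le one_pos hu)
  have h2 : omegaLimitSet ψ x ⊆ Uᶜ := by
    refine (Set.biInter_subset_of_mem (Set.mem_Ioi.mpr one_pos)).trans ?_
    rw [← hU.isClosed_compl.closure_eq]
    exact closure_mono h1
  obtain ⟨z, hz⟩ := hne
  exact h2 hz (hsub hz)

theorem omega_maps (x : E) (s : ℝ) :
    (fun y => ψ y s) '' omegaLimitSet ψ x ⊆ omegaLimitSet ψ x := by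
  intro z hz
  rw [omegaLimitSet, Set.mem_iInter₂]
  intro t' ht'
  obtain ⟨y, hy, rfl⟩ := hz
  have key : ψ y s ∈ closure (ψ x '' Ici ((|t'| + |s| + 1) + s)) := by
    have h1 : y ∈ closure (ψ x '' Ici (|t'| + |s| + 1)) :=
      omega_subset_tail hψ x (by positivity) hy
    have := image_closure_subset_closure_image (s := ψ x '' Ici (|t'| + |s| + 1)) (cont_t hψ s) ⟨y, h1, rfl⟩
    rwa [tail_image hψ] at this
  refine closure_mono (Set.image_mono (Set.Ici_subset_Ici.mpr ?_)) key
  have := abs_nonneg s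
  have := le_abs_self t'
  have := neg_abs_le s
  linarith

theorem negOmega_maps (x : E) (s : ℝ) :
    (fun y => ψ y s) '' negOmegaLimitSet ψ x ⊆ negOmegaLimitSet ψ x := by
  intro z hz
  rw [negOmegaLimitSet, Set.mem_iInter₂]
  intro t' ht'
  obtain ⟨y, hy, rfl⟩ := hz
  have key : ψ y s ∈ closure (ψ x '' Iic ((-(|t'| + |s| + 1)) + s)) := by
    have h1 : y ∈ closure (ψ x '' Iic (-(|t'| + |s| + 1))) :=
      negOmega_subset_tail hψ x (neg_lt_zero.mpr (by positivity)) hy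
    have := image_closure_subset_closure_image (s := ψ x '' Iic (-(|t'| + |s| + 1))) (cont_t hψ s) ⟨y, h1, rfl⟩
    rwa [tail_image_neg hψ] at this
  refine closure_mono (Set.image_mono (Set.Iic_subset_Iic.mpr ?_)) key
  have := abs_nonneg s
  have := neg_abs_le t'
  have := le_abs_self s
  linarith

theorem omega_mem_shift (x : E) (s : ℝ) {z : E} (hz : z ∈ omegaLimitSet ψ x) :
    ψ z s ∈ omegaLimitSet ψ x :=
  omega_maps hψ x s ⟨z, hz, rfl⟩

theorem negOmega_mem_shift (x : E) (s : ℝ) {z : E} (hz : z ∈ negOmegaLimitSet ψ x) :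
    ψ z s ∈ negOmegaLimitSet ψ x :=
  negOmega_maps hψ x s ⟨z, hz, rfl⟩

theorem omega_image (x : E) (s : ℝ) :
    (fun y => ψ y s) '' omegaLimitSet ψ x = omegaLimitSet ψ x := by
  refine le_antisymm (omega_maps hψ x s) ?_
  intro z hz
  exact ⟨ψ z (-s), omega_mem_shift hψ x (-s) hz, cancel' hψ z s⟩

theorem omega_shift (x : E) (s : ℝ) :
    omegaLimitSet ψ (ψ x s) = omegaLimitSet ψ x := by
  have tails : ∀ t : ℝ, ψ (ψ x s) '' Ici t = ψ x '' Ici (s + t) := by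
    intro t
    have : ψ (ψ x s) = fun u => ψ x (s + u) := by
      funext u; exact hψ.2.2 x s u
    rw [this]
    ext z
    simp only [Set.mem_image, Set.mem_Ici]
    constructor
    · rintro ⟨u, hu, rfl⟩; exact ⟨s + u, by linarith, rfl⟩
    · rintro ⟨u, hu, rfl⟩; exact ⟨u - s, by linarith, by rw [add_sub_cancel]⟩
  apply le_antisymm
  · intro z hz
    rw [omegaLimitSet, Set.mem_iInter₂]
    intro t ht
    have h1 : z ∈ closure (ψ (ψ x s) '' Ici (|t| + |s| + 1)) :=
      omega_subset_tail hψ (ψ x s) (by positivity) hz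
    rw [tails] at h1
    refine closure_mono (Set.image_mono (Set.Ici_subset_Ici.mpr ?_)) h1
    have := le_abs_self t
    have := neg_abs_le s
    have := abs_nonneg t
    linarith
  · intro z hz
    rw [omegaLimitSet, Set.mem_iInter₂]
    intro t ht
    rw [tails]
    have h1 : z ∈ closure (ψ x '' Ici (|s + t| + 1)) :=
      omega_subset_tail hψ x (by positivity) hz
    refine closure_mono (Set.image_mono (Set.Ici_subset_Ici.mpr ?_)) h1
    have := le_abs_self (s + t)
    linarith

theorem omega_subset_posInv (x : E) {S : Set E} (hS : IsClosed S)
    (hpos : ∀ y ∈ S, ∀ t : ℝ, 0 ≤ t → ψ y t ∈ S) (hx : x ∈ S) :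
    omegaLimitSet ψ x ⊆ S := by
  refine (omega_subset_tail hψ x one_pos).trans ?_
  rw [← hS.closure_eq]
  refine closure_mono ?_
  rintro z ⟨u, hu, rfl⟩
  exact hpos x hx u (by linarith [Set.mem_Ici.mp hu])

end Omega

section Misc
include hψ

omit hψ in
theorem mem_invariant {S : Set E} (hinv : ∀ t : ℝ, (fun y => ψ y t) '' S = S)
    {x : E} (hx : x ∈ S) (t : ℝ) : ψ x t ∈ S := by
  rw [← hinv t]; exact ⟨x, hx, rfl⟩

theorem invariant_closure {S : Set E} (hinv : ∀ t : ℝ, (fun y => ψ y t) '' S = S) :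
    ∀ t : ℝ, (fun y => ψ y t) '' closure S = closure S := by
  have sub : ∀ t : ℝ, (fun y => ψ y t) '' closure S ⊆ closure S := by
    intro t
    refine (image_closure_subset_closure_image (cont_t hψ t)).trans ?_
    rw [hinv t]
  intro t
  refine le_antisymm (sub t) ?_
  intro z hz
  exact ⟨ψ z (-t), sub (-t) ⟨z, hz, rfl⟩, cancel' hψ z t⟩

theorem closure_tail_maps (x : E) (T t : ℝ) :
    (fun y => ψ y T) '' closure (ψ x '' Iic t) ⊆ closure (ψ x '' Iic (t + T)) := by
  refine (image_closure_subset_closure_image (cont_t hψ T)).trans ?_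
  rw [tail_image_neg hψ]

omit hψ in
theorem not_tendsto_escape (x : E) (h : ¬ Tendsto (fun t => ‖ψ x t‖) atBot atTop) :
    ∃ M : ℝ, 0 ≤ M ∧ ∃ᶠ t in (atBot : Filter ℝ), ‖ψ x t‖ ≤ M := by
  rw [Filter.tendsto_atTop] at h
  push_neg at h
  obtain ⟨b, hb⟩ := h
  exact ⟨max b 0, le_max_right _ _, hb.mono fun t ht => ht.le.trans (le_max_left _ _)⟩

theorem negOmega_nonempty_of_frequently (x : E) (M : ℝ)
    (h : ∃ᶠ t in (atBot : Filter ℝ), ‖ψ x t‖ ≤ M) :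
    ∃ y ∈ negOmegaLimitSet ψ x, ‖y‖ ≤ M := by
  set D : ℝ → Set E := fun t => closure (ψ x '' Iic (-(|t| + 1))) ∩ closedBall 0 M with hD
  have hne : ∀ t, (D t).Nonempty := by
    intro t
    obtain ⟨s, hsM, hs⟩ := (h.and_eventually (eventually_le_atBot (-(|t| + 1)))).exists
    exact ⟨ψ x s, subset_closure ⟨s, hs, rfl⟩, mem_closedBall_zero_iff.mpr hsM⟩
  have hcl : ∀ t, IsClosed (D t) := fun t => isClosed_closure.inter Metric.isClosed_closedBall
  have hcpt : ∀ t, IsCompact (D t) := fun t =>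
    isCompact_of_isClosed_isBounded (hcl t)
      ((Metric.isBounded_closedBall).subset Set.inter_subset_right)
  have hmono : ∀ a b : ℝ, |a| ≤ |b| → D b ⊆ D a := by
    intro a b hab
    refine Set.inter_subset_inter_left _ (closure_mono (Set.image_mono ?_))
    exact Set.Iic_subset_Iic.mpr (by linarith)
  have hdir : Directed (fun x1 x2 : Set E => x1 ⊇ x2) D := by
    intro a b
    have habs : |(|a| + |b|)| = |a| + |b| := abs_of_nonneg (add_nonneg (abs_nonneg a) (abs_nonneg b))
    refine ⟨|a| + |b|, hmono a (|a| + |b|) ?_, hmono b (|a| + |b|) ?_⟩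
    · rw [habs]; linarith [abs_nonneg b]
    · rw [habs]; linarith [abs_nonneg a]
  obtain ⟨y, hy⟩ := IsCompact.nonempty_iInter_of_directed_nonempty_isCompact_isClosed D hdir hne hcpt hcl
  rw [Set.mem_iInter] at hy
  refine ⟨y, ?_, mem_closedBall_zero_iff.mp (hy 0).2⟩
  rw [negOmegaLimitSet, Set.mem_iInter₂]
  intro t ht
  refine closure_mono (Set.image_mono (Set.Iic_subset_Iic.mpr ?_)) (hy t).1
  have := neg_abs_le t
  linarith

end Misc

section Dissip
include hψ

theorem forward_bound (hne : ∀ x : E, (omegaLimitSet ψ x).Nonempty)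
    {W : Set E} (hW : ∀ x : E, omegaLimitSet ψ x ⊆ W)
    {rW r' : ℝ} (hrW : W ⊆ closedBall 0 rW) (hr' : rW < r') :
    ∃ L, r' ≤ L ∧ ∀ x ∈ closedBall (0:E) r', ∀ t : ℝ, 0 ≤ t → ‖ψ x t‖ ≤ L := by
  by_contra hcon
  push_neg at hcon
  have hbig : ∀ m : ℕ, ∃ x ∈ closedBall (0:E) r', ∃ t : ℝ, 0 ≤ t ∧ max (m:ℝ) r' < ‖ψ x t‖ := by
    intro m
    obtain ⟨x, hx, t, ht, hlt⟩ := hcon (max (m:ℝ) r') (le_max_right _ _)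
    exact ⟨x, hx, t, ht, hlt⟩
  set G : ℕ → Set E := fun m =>
    {y | ‖y‖ = r' ∧ ∃ t, 0 ≤ t ∧ (m : ℝ) ≤ ‖ψ y t‖ ∧ ∀ s ∈ Icc 0 t, r' ≤ ‖ψ y s‖} with hG
  -- each G m is nonempty via a "last exit time" argument
  have hGne : ∀ m, (G m).Nonempty := by
    intro m
    obtain ⟨x, hx, t, ht, hlt⟩ := hbig m
    have hxr : ‖x‖ ≤ r' := mem_closedBall_zero_iff.mp hx
    set S' : Set ℝ := Icc 0 t ∩ {s | ‖ψ x s‖ ≤ r'} with hS'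
    have hS'cl : IsClosed S' :=
      isClosed_Icc.inter (isClosed_le ((cont_x hψ x).norm) continuous_const)
    have h0S' : (0:ℝ) ∈ S' := by
      constructor
      · exact ⟨le_refl 0, ht⟩
      · simpa [hψ.2.1] using hxr
    have hS'cpt : IsCompact S' :=
      isCompact_Icc.inter_right (isClosed_le ((cont_x hψ x).norm) continuous_const)
    set σ := sSup S' with hσ
    have hσmem : σ ∈ S' := hS'cpt.sSup_mem ⟨0, h0S'⟩
    have hσ0 : 0 ≤ σ := hσmem.1.1
    have hσt : σ ≤ t := hσmem.1.2
    have hσr : ‖ψ x σ‖ ≤ r' := hσmem.2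
    have hσlt : σ < t := by
      rcases lt_or_eq_of_le hσt with h | h
      · exact h
      · exfalso; rw [h] at hσr
        have := lt_of_le_of_lt (le_max_right (m:ℝ) r') hlt
        linarith
    have hgt : ∀ s, σ < s → s ≤ t → r' < ‖ψ x s‖ := by
      intro s hs1 hs2
      by_contra hle
      push_neg at hle
      have : s ∈ S' := ⟨⟨by linarith, hs2⟩, hle⟩
      have := le_csSup hS'cpt.bddAbove this
      linarith
    have hσge : r' ≤ ‖ψ x σ‖ := by
      have hsub : Ioc σ t ⊆ {s : ℝ | r' ≤ ‖ψ x s‖} := fun s hs => (hgt s hs.1 hs.2).le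
      have hclosed : IsClosed {s : ℝ | r' ≤ ‖ψ x s‖} :=
        isClosed_le continuous_const ((cont_x hψ x).norm)
      have : σ ∈ closure (Ioc σ t) := by
        rw [closure_Ioc hσlt.ne]
        exact ⟨le_refl σ, hσt⟩
      exact ((closure_mono hsub).trans hclosed.closure_eq.subset) this
    refine ⟨ψ x σ, le_antisymm hσr hσge, t - σ, by linarith, ?_, ?_⟩
    · rw [hψ.2.2, add_sub_cancel]
      exact le_of_lt (lt_of_le_of_lt (le_max_left _ _) hlt)
    · intro s hs
      rw [hψ.2.2]
      rcases eq_or_lt_of_le hs.1 with h | h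
      · rw [← h, add_zero]; exact hσge
      · exact (hgt (σ + s) (by linarith) (by linarith [hs.2])).le
  have hGsub : ∀ m, G m ⊆ closedBall (0:E) r' := fun m y hy =>
    mem_closedBall_zero_iff.mpr hy.1.le
  set Gc : ℕ → Set E := fun m => closure (G m) with hGc
  have hGccl : ∀ m, IsClosed (Gc m) := fun m => isClosed_closure
  have hGccpt : ∀ m, IsCompact (Gc m) := by
    intro m
    refine isCompact_of_isClosed_isBounded (hGccl m) ?_
    have : Gc m ⊆ closedBall (0:E) r' := by
      have hb : IsClosed (closedBall (0:E) r') := Metric.isClosed_closedBall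
      calc Gc m ⊆ closure (closedBall (0:E) r') := closure_mono (hGsub m)
        _ = closedBall (0:E) r' := hb.closure_eq
    exact Metric.isBounded_closedBall.subset this
  have hGmono : ∀ a b : ℕ, a ≤ b → G b ⊆ G a := by
    intro a b hab y hy
    obtain ⟨h1, t, h2, h3, h4⟩ := hy
    exact ⟨h1, t, h2, le_trans (by exact_mod_cast Nat.cast_le.mpr hab) h3, h4⟩
  have hdir : Directed (fun x1 x2 : Set E => x1 ⊇ x2) Gc := by
    intro a b
    exact ⟨max a b, closure_mono (hGmono a _ (le_max_left _ _)),
      closure_mono (hGmono b _ (le_max_right _ _))⟩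
  obtain ⟨q, hq⟩ := IsCompact.nonempty_iInter_of_directed_nonempty_isCompact_isClosed Gc hdir
    (fun m => (hGne m).mono subset_closure) hGccpt hGccl
  rw [Set.mem_iInter] at hq
  -- q stays outside the ball of radius r' for all positive time
  have hqstay : ∀ s : ℝ, 0 ≤ s → r' ≤ ‖ψ q s‖ := by
    intro s₀ hs₀
    set H : Set E := ⋂ s ∈ Icc (0:ℝ) s₀, {z | r' ≤ ‖ψ z s‖} with hH
    have hHcl : IsClosed H :=
      isClosed_biInter fun s _ => isClosed_le continuous_const ((cont_t hψ s).norm)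
    obtain ⟨Mb, hMb⟩ :=
      (((isCompact_sphere (0:E) r').prod isCompact_Icc).image hψ.1).isBounded.subset_closedBall 0
    have key : G (⌈max Mb 0⌉₊ + 1) ⊆ H := by
      intro y hy
      obtain ⟨h1, t, h2, h3, h4⟩ := hy
      have htgt : s₀ < t := by
        by_contra hts
        push_neg at hts
        have : ψ y t ∈ (fun p : E × ℝ => ψ p.1 p.2) '' (sphere 0 r' ×ˢ Icc 0 s₀) :=
          ⟨(y, t), ⟨mem_sphere_zero_iff_norm.mpr h1, ⟨h2, hts⟩⟩, rfl⟩
        have hble := mem_closedBall_zero_iff.mp (hMb this)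
        have : ((⌈max Mb 0⌉₊ + 1 : ℕ) : ℝ) ≤ max Mb 0 + 1 + 1 := by
          push_cast
          have := Nat.ceil_lt_add_one (le_max_right Mb 0)
          linarith
        have hle2 : (⌈max Mb 0⌉₊ + 1 : ℕ) ≥ (1:ℕ) := by omega
        have := Nat.le_ceil (max Mb 0)
        -- ‖ψ y t‖ ≤ Mb ≤ max Mb 0 ≤ ⌈max Mb 0⌉₊ < ⌈max Mb 0⌉₊ + 1 ≤ ‖ψ y t‖
        have hc1 : (⌈max Mb 0⌉₊ : ℝ) + 1 ≤ ‖ψ y t‖ := by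
          have := h3
          push_cast at this
          linarith
        have hc2 : ‖ψ y t‖ ≤ max Mb 0 := le_trans hble (le_max_left _ _)
        linarith
      rw [hH, Set.mem_iInter₂]
      intro s hs
      exact h4 s ⟨hs.1, le_trans hs.2 htgt.le⟩
    have : q ∈ H := (hHcl.closure_subset_iff.mpr key) (hq _)
    rw [hH, Set.mem_iInter₂] at this
    exact this s₀ ⟨hs₀, le_refl s₀⟩
  -- so the omega limit set of q avoids the ball of radius rW, contradiction
  have homega : omegaLimitSet ψ q ⊆ {z : E | r' ≤ ‖z‖} := by
    refine (omega_subset_tail hψ q one_pos).trans ?_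
    have hclosed : IsClosed {z : E | r' ≤ ‖z‖} := isClosed_le continuous_const continuous_norm
    rw [← hclosed.closure_eq]
    refine closure_mono ?_
    rintro z ⟨u, hu, rfl⟩
    exact hqstay u (by linarith [Set.mem_Ici.mp hu])
  obtain ⟨z, hz⟩ := hne q
  have h1 : ‖z‖ ≤ rW := mem_closedBall_zero_iff.mp (hrW (hW q hz))
  have h2 : r' ≤ ‖z‖ := homega hz
  linarith

theorem ext_subset_escape (hne : ∀ x : E, (omegaLimitSet ψ x).Nonempty)
    {W : Set E} (hW : ∀ x : E, omegaLimitSet ψ x ⊆ W)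
    {rW r' : ℝ} (hrW : W ⊆ closedBall 0 rW) (hr' : rW < r') :
    ∃ L, r' ≤ L ∧ (∀ x ∈ closedBall (0:E) r', ∀ t : ℝ, 0 ≤ t → ‖ψ x t‖ ≤ L) ∧
      ∀ x : E, L < ‖x‖ → Tendsto (fun t => ‖ψ x t‖) atBot atTop := by
  obtain ⟨L, hLr, hL⟩ := forward_bound hψ hne hW hrW hr'
  refine ⟨L, hLr, hL, ?_⟩
  intro x hx
  have hback : ∀ s : ℝ, s ≤ 0 → r' < ‖ψ x s‖ := by
    intro s hs
    by_contra hle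
    push_neg at hle
    have := hL (ψ x s) (mem_closedBall_zero_iff.mpr hle) (-s) (by linarith)
    rw [cancel hψ] at this
    linarith
  by_contra htend
  obtain ⟨M, hM0, hfreq⟩ := not_tendsto_escape x htend
  obtain ⟨y, hy, hyM⟩ := negOmega_nonempty_of_frequently hψ x M hfreq
  have hFcl : IsClosed {z : E | r' ≤ ‖z‖} := isClosed_le continuous_const continuous_norm
  have hsubF : negOmegaLimitSet ψ x ⊆ {z : E | r' ≤ ‖z‖} := by
    refine (negOmega_subset_tail hψ x (by norm_num : (-1:ℝ) < 0)).trans ?_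
    rw [← hFcl.closure_eq]
    refine closure_mono ?_
    rintro z ⟨u, hu, rfl⟩
    exact (hback u (by linarith [Set.mem_Iic.mp hu])).le
  have horbit : ∀ s : ℝ, r' ≤ ‖ψ y s‖ := fun s => hsubF (negOmega_mem_shift hψ x s hy)
  have homega : omegaLimitSet ψ y ⊆ {z : E | r' ≤ ‖z‖} := by
    refine (omega_subset_tail hψ y one_pos).trans ?_
    rw [← hFcl.closure_eq]
    refine closure_mono ?_
    rintro z ⟨u, _, rfl⟩
    exact horbit u
  obtain ⟨z, hz⟩ := hne y
  have h1 : ‖z‖ ≤ rW := mem_closedBall_zero_iff.mp (hrW (hW y hz))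
  have h2 : r' ≤ ‖z‖ := homega hz
  linarith

end Dissip

section MainSingle

theorem main_single (hψ : IsFlow ψ) (hrank : 1 < Module.rank ℝ E)
    (hdiss : Dissipative ψ)
    {K : Set E} (hKcpt : IsCompact K)
    (hKA : attractionRegion ψ K ∈ nhdsSet K)
    (hAbd : IsBounded (attractionRegion ψ K))
    {ρ : ℝ}
    {D : Set E} (hDcl : IsClosed D) (hDconn : IsConnected D)
    (hDpos : ∀ x ∈ D, ∀ t : ℝ, 0 ≤ t → ψ x t ∈ D)
    (hKD : K ⊆ interior D) (hDρ : D ⊆ closedBall 0 ρ)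
    (hiso : ∀ S : Set E, FlowInvariant ψ S → S ⊆ closedBall 0 ρ → S ⊆ K) :
    ((attractionRegion ψ K ∪ {x : E | Tendsto (fun t => ‖ψ x t‖) atBot atTop})ᶜ).Nonempty ∧
    IsIsolatedInvariant ψ ((attractionRegion ψ K ∪ {x : E | Tendsto (fun t => ‖ψ x t‖) atBot atTop})ᶜ) ∧
    ((attractionRegion ψ K ∪ {x : E | Tendsto (fun t => ‖ψ x t‖) atBot atTop})ᶜ) ⊆ Kᶜ ∧
    ∃ U V : Set E, IsConnected U ∧ IsConnected V ∧ IsBounded U ∧ ¬ IsBounded V ∧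
      Disjoint U V ∧
      U ∪ V = (((attractionRegion ψ K ∪ {x : E | Tendsto (fun t => ‖ψ x t‖) atBot atTop})ᶜ))ᶜ ∧
      (∀ x ∈ (((attractionRegion ψ K ∪ {x : E | Tendsto (fun t => ‖ψ x t‖) atBot atTop})ᶜ))ᶜ,
        connectedComponentIn ((((attractionRegion ψ K ∪ {x : E | Tendsto (fun t => ‖ψ x t‖) atBot atTop})ᶜ))ᶜ) x = U ∨
        connectedComponentIn ((((attractionRegion ψ K ∪ {x : E | Tendsto (fun t => ‖ψ x t‖) atBot atTop})ᶜ))ᶜ) x = V) ∧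
      K ⊆ U ∧ U = attractionRegion ψ K := by
  classical
  have hnontriv : Nontrivial E := rank_pos_iff_nontrivial.mp (lt_trans zero_lt_one hrank)
  set A := attractionRegion ψ K with hA
  set R := {x : E | Tendsto (fun t => ‖ψ x t‖) atBot atTop} with hR
  have hfar : ∀ c : ℝ, ∃ x : E, c < ‖x‖ := by
    intro c
    obtain ⟨x, hx⟩ := exists_norm_eq E (le_max_right c 0 |>.trans (le_of_lt (lt_add_one _)))
    exact ⟨x, by rw [hx]; exact lt_of_le_of_lt (le_max_left c 0) (lt_add_one _)⟩
  have hKsubA : K ⊆ A := subset_of_mem_nhdsSet hKA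
  -- D is contained in the region of attraction
  have hDomega : ∀ x ∈ D, omegaLimitSet ψ x ⊆ K := by
    intro x hx
    have h1 : omegaLimitSet ψ x ⊆ D := omega_subset_posInv hψ x hDcl hDpos hx
    exact hiso _ (omega_image hψ x) (h1.trans hDρ)
  have hDA : D ⊆ A := fun x hx => ⟨hdiss.1 x, hDomega x hx⟩
  obtain ⟨x₀, hx₀D⟩ := hDconn.nonempty
  have hKne : K.Nonempty := by
    obtain ⟨z, hz⟩ := hdiss.1 x₀
    exact ⟨z, hDomega x₀ hx₀D hz⟩
  have hAne : A.Nonempty := ⟨x₀, hDA hx₀D⟩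
  -- shift characterization of A
  have hAshift : ∀ (x : E) (t : ℝ), x ∈ A ↔ ψ x t ∈ A := by
    intro x t
    simp only [hA, attractionRegion, Set.mem_setOf_eq, omega_shift hψ x t]
  have hAim : ∀ t : ℝ, (fun y => ψ y t) '' A = A := by
    intro t
    apply le_antisymm
    · rintro z ⟨y, hy, rfl⟩
      exact (hAshift y t).mp hy
    · intro z hz
      refine ⟨ψ z (-t), (hAshift _ t).mpr ?_, cancel' hψ z t⟩
      rw [cancel' hψ]
      exact hz
  -- A is open
  have hAeq : A = ⋃ t ∈ Ici (0:ℝ), (fun x => ψ x t) ⁻¹' D := by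
    apply le_antisymm
    · intro x hx
      obtain ⟨t, ht, hmem⟩ := omega_exists_enter x isOpen_interior hx.1 (hx.2.trans hKD)
      have hmemD : x ∈ (fun x => ψ x t) ⁻¹' D := Set.mem_preimage.mpr (interior_subset hmem)
      exact Set.mem_biUnion (Set.mem_Ici.mpr ht.le) hmemD
    · intro x hx
      obtain ⟨t, _, hmem⟩ := Set.mem_iUnion₂.mp hx
      exact (hAshift x t).mpr (hDA hmem)
  have hAeq' : A = ⋃ t ∈ Ici (0:ℝ), (fun x => ψ x t) ⁻¹' (interior D) := by
    apply le_antisymm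
    · intro x hx
      obtain ⟨t, ht, hmem⟩ := omega_exists_enter x isOpen_interior hx.1 (hx.2.trans hKD)
      have hmemD : x ∈ (fun x => ψ x t) ⁻¹' (interior D) := hmem
      exact Set.mem_biUnion (Set.mem_Ici.mpr ht.le) hmemD
    · intro x hx
      obtain ⟨t, _, hmem⟩ := Set.mem_iUnion₂.mp hx
      exact (hAshift x t).mpr (hDA (interior_subset hmem))
  have hAopen : IsOpen A := by
    rw [hAeq']
    exact isOpen_biUnion fun t _ => isOpen_interior.preimage (cont_t hψ t)
  -- A is connected
  have hAconn : IsConnected A := by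
    refine ⟨⟨x₀, hDA hx₀D⟩, isPreconnected_of_forall x₀ ?_⟩
    intro y hy
    rw [hAeq] at hy
    obtain ⟨t, ht, hyD⟩ := Set.mem_iUnion₂.mp hy
    refine ⟨(fun x => ψ x (-t)) '' D, ?_, ?_, ?_, ?_⟩
    · rintro z ⟨w, hw, rfl⟩
      refine (hAshift _ t).mpr ?_
      rw [cancel' hψ]
      exact hDA hw
    · exact ⟨ψ x₀ t, hDpos x₀ hx₀D t (Set.mem_Ici.mp ht), cancel hψ x₀ t⟩
    · exact ⟨ψ y t, hyD, cancel hψ y t⟩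
    · exact hDconn.isPreconnected.image _ (cont_t hψ (-t)).continuousOn
  -- construction of the escape bound L
  set W := closure (⋃ x, omegaLimitSet ψ x) with hW
  have hWsub : ∀ x : E, omegaLimitSet ψ x ⊆ W := fun x =>
    (Set.subset_iUnion (fun x => omegaLimitSet ψ x) x).trans subset_closure
  obtain ⟨rW, hrW⟩ := hdiss.2.isBounded.subset_closedBall 0
  have hrW' : W ⊆ closedBall 0 (max rW 0) :=
    hrW.trans (closedBall_subset_closedBall (le_max_left _ _))
  obtain ⟨L, hLr, hLball, hLesc⟩ := ext_subset_escape hψ hdiss.1 hWsub hrW'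
    (lt_add_one (max rW 0))
  have hL0 : 0 < L := lt_of_lt_of_le (by positivity) hLr
  -- membership shifts for R
  have hRmem : ∀ (z : E) (t : ℝ), z ∈ R → ψ z t ∈ R := by
    intro z t hz
    have heq : (fun s => ‖ψ (ψ z t) s‖) = (fun s => ‖ψ z (t + s)‖) := by
      funext s; rw [hψ.2.2]
    rw [hR, Set.mem_setOf_eq, heq]
    exact hz.comp (tendsto_atBot_add_const_left _ t tendsto_id)
  have hRshift : ∀ (x : E) (t : ℝ), x ∈ R ↔ ψ x t ∈ R := by
    intro x t
    refine ⟨hRmem x t, fun h => ?_⟩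
    have := hRmem _ (-t) h
    rwa [cancel hψ] at this
  have hRim : ∀ t : ℝ, (fun y => ψ y t) '' R = R := by
    intro t
    apply le_antisymm
    · rintro z ⟨y, hy, rfl⟩
      exact hRmem y t hy
    · intro z hz
      exact ⟨ψ z (-t), hRmem z (-t) hz, cancel' hψ z t⟩
  -- A and R are disjoint
  obtain ⟨cA, hcA⟩ := hAbd.subset_closedBall 0
  have hARdisj : Disjoint A R := by
    rw [Set.disjoint_left]
    intro x hxA hxR
    obtain ⟨t, ht⟩ := (hxR.eventually_gt_atTop cA).exists
    have hmem : ψ x t ∈ A := (hAshift x t).mp hxA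
    have := mem_closedBall_zero_iff.mp (hcA hmem)
    linarith
  -- the exterior set E₀
  set E₀ := {x : E | L < ‖x‖} with hE₀
  have hEopen : IsOpen E₀ := isOpen_lt continuous_const continuous_norm
  have hEsub : E₀ ⊆ R := fun x hx => hLesc x hx
  have hEconn : IsConnected E₀ := by
    have hmap : E₀ = (fun p : E × ℝ => p.2 • p.1) '' ((sphere (0:E) 1) ×ˢ (Ioi L)) := by
      ext x
      constructor
      · intro hx
        have hx' : L < ‖x‖ := hx
        have hx0 : x ≠ 0 := by
          intro h
          rw [h, norm_zero] at hx'
          linarith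
        have hnx : ‖x‖ ≠ 0 := norm_ne_zero_iff.mpr hx0
        refine ⟨(‖x‖⁻¹ • x, ‖x‖), ⟨?_, hx'⟩, ?_⟩
        · rw [mem_sphere_zero_iff_norm, norm_smul, norm_inv, norm_norm,
            inv_mul_cancel₀ hnx]
        · simp only [smul_smul]
          rw [mul_inv_cancel₀ hnx, one_smul]
      · rintro ⟨⟨v, t⟩, ⟨hv, ht⟩, rfl⟩
        have hv1 : ‖v‖ = 1 := mem_sphere_zero_iff_norm.mp hv
        have ht' : L < t := ht
        show L < ‖t • v‖
        rw [norm_smul, hv1, mul_one, Real.norm_eq_abs, abs_of_pos (hL0.trans ht')]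
        exact ht'
    rw [hmap]
    exact ((isConnected_sphere hrank 0 zero_le_one).prod isConnected_Ioi).image _
      (continuous_snd.smul continuous_fst).continuousOn
  -- R is open
  have hRdecomp : R = ⋃ s ∈ Ici (0:ℝ), (fun x => ψ x (-s)) ⁻¹' E₀ := by
    apply le_antisymm
    · intro x hx
      obtain ⟨t, hgt, ht0⟩ := ((hx.eventually_gt_atTop L).and (eventually_le_atBot (0:ℝ))).exists
      refine Set.mem_biUnion (Set.mem_Ici.mpr (by linarith : (0:ℝ) ≤ -t)) ?_
      simpa [neg_neg, hE₀] using hgt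
    · intro x hx
      obtain ⟨s, _, hmem⟩ := Set.mem_iUnion₂.mp hx
      have h1 : ψ x (-s) ∈ R := hEsub hmem
      have := hRmem _ s h1
      rwa [cancel' hψ] at this
  have hRopen : IsOpen R := by
    rw [hRdecomp]
    exact isOpen_biUnion fun s _ => hEopen.preimage (cont_t hψ (-s))
  -- R is connected and unbounded
  obtain ⟨e₀, he₀⟩ := hfar L
  have he₀E : e₀ ∈ E₀ := he₀
  have hRconn : IsConnected R := by
    refine ⟨⟨e₀, hEsub he₀E⟩, isPreconnected_of_forall e₀ ?_⟩
    intro y hy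
    rw [hRdecomp] at hy
    obtain ⟨s, _, hmem⟩ := Set.mem_iUnion₂.mp hy
    set Q := (fun x => ψ x s) '' E₀ with hQ
    have hQR : Q ⊆ R := by
      rintro z ⟨w, hw, rfl⟩
      exact hRmem w s (hEsub hw)
    have hyQ : y ∈ Q := ⟨ψ y (-s), hmem, cancel' hψ y s⟩
    have hQconn : IsConnected Q := hEconn.image _ (cont_t hψ s).continuousOn
    obtain ⟨z, hzQ, hzE⟩ : ∃ z ∈ Q, z ∈ E₀ := by
      by_contra hcon
      push_neg at hcon
      have hQsub : Q ⊆ closedBall 0 L := by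
        intro z hz
        rcases le_or_gt ‖z‖ L with h | h
        · exact mem_closedBall_zero_iff.mpr h
        · exact absurd h (by simpa [hE₀] using hcon z hz)
      have hEim : E₀ ⊆ (fun x => ψ x (-s)) '' (closedBall 0 L) := by
        intro x hx
        exact ⟨ψ x s, hQsub ⟨x, hx, rfl⟩, cancel hψ x s⟩
      obtain ⟨c, hc⟩ := ((isCompact_closedBall (0:E) L).image (cont_t hψ (-s))).isBounded.subset_closedBall 0
      obtain ⟨w, hw⟩ := hfar (max L c)
      have hwE : w ∈ E₀ := lt_of_le_of_lt (le_max_left L c) hw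
      have := mem_closedBall_zero_iff.mp (hc (hEim hwE))
      have := le_max_right L c
      linarith
    refine ⟨Q ∪ E₀, Set.union_subset hQR hEsub, Set.mem_union_right _ he₀E,
      Set.mem_union_left _ hyQ, (hQconn.union ⟨z, hzQ, hzE⟩ hEconn).isPreconnected⟩
  have hRunb : ¬ IsBounded R := by
    intro hb
    obtain ⟨c, hc⟩ := hb.subset_closedBall 0
    obtain ⟨w, hw⟩ := hfar (max L c)
    have hwE : w ∈ E₀ := lt_of_le_of_lt (le_max_left L c) hw
    have := mem_closedBall_zero_iff.mp (hc (hEsub hwE))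
    have := le_max_right L c
    linarith
  -- now the complementary set C
  set C := (A ∪ R)ᶜ with hC
  have hCcl : IsClosed C := (hAopen.union hRopen).isClosed_compl
  have hCsub : C ⊆ closedBall 0 L := by
    intro x hx
    by_contra h
    have : x ∈ R := hLesc x (by simpa [mem_closedBall_zero_iff] using h)
    exact hx (Set.mem_union_right _ this)
  have hCcpt : IsCompact C := isCompact_of_isClosed_isBounded hCcl
    (Metric.isBounded_closedBall.subset hCsub)
  have hCim : FlowInvariant ψ C := by
    intro t
    rw [hC, Set.image_compl_eq (bij hψ t), Set.image_union, hAim t, hRim t]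
  -- C is nonempty (frontier of A)
  have hAneU : A ≠ univ := by
    intro h
    obtain ⟨w, hw⟩ := hfar cA
    have := mem_closedBall_zero_iff.mp (hcA (h ▸ Set.mem_univ w))
    linarith
  have hfr : (frontier A).Nonempty := by
    by_contra h
    rw [Set.not_nonempty_iff_eq_empty] at h
    have hclop : IsClopen A := isClopen_iff_frontier_eq_empty.mpr h
    rcases isClopen_iff.mp hclop with h1 | h1
    · exact hAne.ne_empty h1
    · exact hAneU h1
  obtain ⟨z₀, hz₀⟩ := hfr
  have hCne : C.Nonempty := by
    rw [hAopen.frontier_eq] at hz₀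
    refine ⟨z₀, fun hmem => ?_⟩
    rcases hmem with h | h
    · exact hz₀.2 h
    · obtain ⟨w, hwR, hwA⟩ := _root_.mem_closure_iff.mp hz₀.1 R hRopen h
      exact (Set.disjoint_left.mp hARdisj hwA) hwR
  -- C is disjoint from K
  have hCK : C ⊆ Kᶜ := fun x hx hxK => hx (Set.mem_union_left _ (hKsubA hxK))
  have hCKdisj : Disjoint C K := by
    rw [Set.disjoint_left]
    exact fun x hx hxK => hCK hx hxK
  -- isolating neighborhood of C
  obtain ⟨δ, hδ0, hδdisj⟩ := hCKdisj.exists_cthickenings hCcpt hKcpt.isClosed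
  set N := cthickening δ C with hN
  have hNcpt : IsCompact N := hCcpt.cthickening
  have hCN : C ⊆ interior N :=
    (self_subset_thickening hδ0 C).trans
      (interior_maximal (thickening_subset_cthickening δ C) isOpen_thickening)
  have hNK : Disjoint N K := hδdisj.mono_right (self_subset_cthickening K)
  obtain ⟨cN, hcN⟩ := hNcpt.isBounded.subset_closedBall 0
  have hmax : ∀ S : Set E, FlowInvariant ψ S → S ⊆ N → S ⊆ C := by
    intro S hSinv hSN x hxS
    by_contra hxC
    have hxAR : x ∈ A ∪ R := not_not.mp fun h => hxC h
    have horb : ∀ t : ℝ, ψ x t ∈ S := fun t => mem_invariant hSinv hxS t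
    rcases hxAR with hxA | hxR
    · obtain ⟨y, hy⟩ := hxA.1
      have hyK : y ∈ K := hxA.2 hy
      have hyN : y ∈ N := by
        have hsub : omegaLimitSet ψ x ⊆ closure S := by
          refine (omega_subset_tail hψ x one_pos).trans (closure_mono ?_)
          rintro w ⟨u, _, rfl⟩
          exact horb u
        exact (closure_minimal hSN hNcpt.isClosed) (hsub hy)
      exact (Set.disjoint_left.mp hNK hyN) hyK
    · obtain ⟨t, ht⟩ := (hxR.eventually_gt_atTop cN).exists
      have := mem_closedBall_zero_iff.mp (hcN (hSN (horb t)))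
      linarith
  have hCiso : IsIsolatedInvariant ψ C := ⟨hCcpt, hCim, N, hNcpt, hCN, hCim, hmax⟩
  -- connected components of the complement
  have hCc : Cᶜ = A ∪ R := compl_compl _
  have hccA : ∀ x ∈ A, connectedComponentIn (A ∪ R) x = A := by
    intro x hx
    apply le_antisymm
    · exact (isPreconnected_connectedComponentIn).subset_left_of_subset_union hAopen hRopen
        hARdisj (connectedComponentIn_subset _ _)
        ⟨x, mem_connectedComponentIn (Set.mem_union_left _ hx), hx⟩
    · exact hAconn.isPreconnected.subset_connectedComponentIn hx Set.subset_union_left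
  have hccR : ∀ x ∈ R, connectedComponentIn (A ∪ R) x = R := by
    intro x hx
    apply le_antisymm
    · exact (isPreconnected_connectedComponentIn).subset_right_of_subset_union hAopen hRopen
        hARdisj (connectedComponentIn_subset _ _)
        ⟨x, mem_connectedComponentIn (Set.mem_union_right _ hx), hx⟩
    · exact hRconn.isPreconnected.subset_connectedComponentIn hx Set.subset_union_right
  refine ⟨hCne, hCiso, hCK, A, R, hAconn, hRconn, hAbd, hRunb, hARdisj, hCc.symm, ?_, hKsubA, rfl⟩
  intro x hx
  rw [hCc] at hx ⊢
  rcases hx with h | h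
  · exact Or.inl (hccA x h)
  · exact Or.inr (hccR x h)

end MainSingle

end FlowAux


/-- For a coercive family of dissipative flows on `ℝⁿ` (`n ≥ 2`) and a
continuation `(K_λ)` of the global attractor `K₀` by attractors, for all small `λ > 0`
the set `C_λ = ℝⁿ ∖ (A_λ(K_λ) ∪ R_λ)` is a nonempty isolated invariant compactum
contained in `ℝⁿ ∖ K_λ`, its complement has exactly two connected components, one
bounded and one unbounded, and `K_λ` lies in the bounded one, which equals
`A_λ(K_λ)`. -/
theorem coercive_complementarySet_separates {n : ℕ} (hn : 2 ≤ n)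
    (φ : ℝ → EuclideanSpace ℝ (Fin n) → ℝ → EuclideanSpace ℝ (Fin n))
    (hφ : IsParamFlow φ)
    (hdiss : ∀ l ∈ Icc (0 : ℝ) 1, Dissipative (φ l))
    (hcoer : CoerciveFamily φ)
    (lam1 : ℝ) (hlam1 : lam1 ∈ Ioc (0 : ℝ) 1)
    (K : ℝ → Set (EuclideanSpace ℝ (Fin n)))
    (hcont : IsContinuation φ (Icc 0 lam1) K)
    (hK0 : IsGlobalAttractor (φ 0) (K 0))
    (hattr : ∀ l ∈ Ioc (0 : ℝ) lam1, IsAttractor (φ l) (K l)) :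
    ∃ lam0, 0 < lam0 ∧ lam0 ≤ lam1 ∧ ∀ l, 0 < l → l < lam0 →
      (complementarySet φ K l).Nonempty ∧
      IsIsolatedInvariant (φ l) (complementarySet φ K l) ∧
      complementarySet φ K l ⊆ (K l)ᶜ ∧
      ∃ U V : Set (EuclideanSpace ℝ (Fin n)),
        IsConnected U ∧ IsConnected V ∧ IsBounded U ∧ ¬ IsBounded V ∧
        Disjoint U V ∧ U ∪ V = (complementarySet φ K l)ᶜ ∧
        (∀ x ∈ (complementarySet φ K l)ᶜ,
          connectedComponentIn ((complementarySet φ K l)ᶜ) x = U ∨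
            connectedComponentIn ((complementarySet φ K l)ᶜ) x = V) ∧
        K l ⊆ U ∧ U = attractionRegion (φ l) (K l) := by
  classical
  obtain ⟨hlam1pos, hlam11⟩ := hlam1
  have h0mem : (0:ℝ) ∈ Icc (0:ℝ) 1 := ⟨le_refl 0, zero_le_one⟩
  have hflow0 : IsFlow (φ 0) := hφ.2 0 h0mem
  have hrank : 1 < Module.rank ℝ (EuclideanSpace ℝ (Fin n)) := by
    have h1 : (Module.finrank ℝ (EuclideanSpace ℝ (Fin n)) : Cardinal) =
        Module.rank ℝ (EuclideanSpace ℝ (Fin n)) := Module.finrank_eq_rank ℝ _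
    rw [← h1, finrank_euclideanSpace_fin]
    exact_mod_cast (by omega : 1 < n)
  -- globally continuous clamped flow
  have hclamp : ∀ l : ℝ, l ∈ Icc (0:ℝ) 1 → (min 1 (max 0 l)) = l := fun l hl => by
    rw [max_eq_right hl.1, min_eq_right hl.2]
  have hclamp0 : (min (1:ℝ) (max 0 0)) = 0 := by norm_num
  have hcont_glob : Continuous
      (fun p : ℝ × (EuclideanSpace ℝ (Fin n)) × ℝ => φ (min 1 (max 0 p.1)) p.2.1 p.2.2) := by
    have hmap : ∀ p : ℝ × (EuclideanSpace ℝ (Fin n)) × ℝ,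
        ((min 1 (max 0 p.1)), p.2) ∈ (Icc (0:ℝ) 1) ×ˢ (univ : Set ((EuclideanSpace ℝ (Fin n)) × ℝ)) := by
      intro p
      exact ⟨⟨le_min zero_le_one (le_max_left 0 p.1), min_le_left _ _⟩, Set.mem_univ _⟩
    have hcont_into : Continuous (fun p : ℝ × (EuclideanSpace ℝ (Fin n)) × ℝ =>
        ((min 1 (max 0 p.1)), p.2)) :=
      (continuous_const.min (continuous_const.max continuous_fst)).prodMk continuous_snd
    exact hφ.1.comp_continuous hcont_into hmap
  -- global attractor facts at λ = 0
  have hK0cpt := hK0.1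
  have hK0inv := hK0.2.1
  have hK0stab := hK0.2.2.1
  have hK0A := hK0.2.2.2
  have hK0ne : (K 0).Nonempty := by
    have h1 : (0 : EuclideanSpace ℝ (Fin n)) ∈ attractionRegion (φ 0) (K 0) := by
      rw [hK0A]; exact Set.mem_univ _
    obtain ⟨z, hz⟩ := h1.1
    exact ⟨z, h1.2 hz⟩
  -- every bounded invariant set of φ 0 lies in K 0
  have hGAmax : ∀ S : Set (EuclideanSpace ℝ (Fin n)),
      FlowInvariant (φ 0) S → IsBounded S → S ⊆ K 0 := by
    intro S hSinv hSbd
    have hScl : ∀ t : ℝ, (fun y => φ 0 y t) '' (closure S) = closure S :=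
      FlowAux.invariant_closure hflow0 hSinv
    obtain ⟨M, hM⟩ := hSbd.closure.subset_closedBall 0
    suffices h : closure S ⊆ K 0 from subset_closure.trans h
    intro x hx
    by_contra hxK
    have hU : ({x}ᶜ : Set (EuclideanSpace ℝ (Fin n))) ∈ nhdsSet (K 0) :=
      (isOpen_compl_singleton).mem_nhdsSet.mpr (fun y hy h => hxK (h ▸ hy))
    obtain ⟨Vs, hVsmem, hVs⟩ := hK0stab _ hU
    have hVsint : K 0 ⊆ interior Vs := subset_interior_iff_mem_nhdsSet.mpr hVsmem
    have horbx : ∀ t : ℝ, φ 0 x t ∈ closure S := fun t => FlowAux.mem_invariant hScl hx t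
    have hfreq : ∃ᶠ t in (atBot : Filter ℝ), ‖φ 0 x t‖ ≤ M :=
      Frequently.of_forall fun t => mem_closedBall_zero_iff.mp (hM (horbx t))
    obtain ⟨y, hy, _⟩ := FlowAux.negOmega_nonempty_of_frequently hflow0 x M hfreq
    have hyA : y ∈ attractionRegion (φ 0) (K 0) := by rw [hK0A]; exact Set.mem_univ _
    obtain ⟨T, hT0, hTmem⟩ := FlowAux.omega_exists_enter y isOpen_interior hyA.1
      (hyA.2.trans hVsint)
    have hyc : y ∈ closure (φ 0 x '' Iic (-T - 1)) :=
      FlowAux.negOmega_subset_tail hflow0 x (by linarith) hy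
    have h2 : φ 0 y T ∈ closure (φ 0 x '' Iic ((-T - 1) + T)) :=
      FlowAux.closure_tail_maps hflow0 x T (-T-1) ⟨y, hyc, rfl⟩
    obtain ⟨w, hwo, hws⟩ := _root_.mem_closure_iff.mp h2 (interior Vs) isOpen_interior hTmem
    obtain ⟨u, hu, rfl⟩ := hws
    have hu0 : u ≤ -1 := by linarith [Set.mem_Iic.mp hu]
    have := hVs _ (interior_subset hwo) (-u) (by linarith)
    rw [FlowAux.cancel hflow0] at this
    exact this rfl
  -- isolating closed balls for K 0
  obtain ⟨rK, hrK⟩ := hK0cpt.isBounded.subset_closedBall 0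
  set r₀ : ℝ := max rK 0 + 1 with hr₀
  have hr₀pos : 0 < r₀ := by positivity
  have hK0ball : K 0 ⊆ ball 0 r₀ := by
    intro x hx
    rw [mem_ball_zero_iff]
    have := mem_closedBall_zero_iff.mp (hrK hx)
    have := le_max_left rK 0
    linarith
  have hballiso : ∀ r : ℝ, r₀ ≤ r →
      IsIsolatingNbhd (φ 0) (closedBall 0 r) (K 0) := by
    intro r hr
    refine ⟨isCompact_closedBall _ _, ?_, hK0inv, ?_⟩
    · rw [interior_closedBall (0 : EuclideanSpace ℝ (Fin n)) (ne_of_gt (lt_of_lt_of_le hr₀pos hr))]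
      exact hK0ball.trans (ball_subset_ball hr)
    · intro S hSinv hSsub
      exact hGAmax S hSinv (Metric.isBounded_closedBall.subset hSsub)
  -- a uniform entering time for the ball B₀
  set B₀ : Set (EuclideanSpace ℝ (Fin n)) := closedBall 0 r₀ with hB₀
  have hB₀cpt : IsCompact B₀ := isCompact_closedBall _ _
  obtain ⟨Vs, hVsmem, hVs⟩ := hK0stab (ball 0 r₀) ((isOpen_ball).mem_nhdsSet.mpr hK0ball)
  have hVsint : K 0 ⊆ interior Vs := subset_interior_iff_mem_nhdsSet.mpr hVsmem
  have hcov : B₀ ⊆ ⋃ t : ℝ, (fun x => φ 0 x t) ⁻¹' (interior Vs) := by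
    intro x _
    have hxA : x ∈ attractionRegion (φ 0) (K 0) := by rw [hK0A]; exact Set.mem_univ _
    obtain ⟨t, _, hmem⟩ := FlowAux.omega_exists_enter x isOpen_interior hxA.1
      (hxA.2.trans hVsint)
    exact Set.mem_iUnion.mpr ⟨t, hmem⟩
  obtain ⟨sfin, hsfin⟩ := hB₀cpt.elim_finite_subcover
    (fun t : ℝ => (fun x => φ 0 x t) ⁻¹' (interior Vs))
    (fun t => isOpen_interior.preimage (FlowAux.cont_t hflow0 t)) hcov
  obtain ⟨T₀, hT₀⟩ := sfin.exists_le
  set T : ℝ := max T₀ 0 + 1 with hT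
  have hTpos : 0 < T := by positivity
  have hTenter : ∀ x ∈ B₀, φ 0 x T ∈ ball (0 : EuclideanSpace ℝ (Fin n)) r₀ := by
    intro x hx
    obtain ⟨t, hts, hxt⟩ := Set.mem_iUnion₂.mp (hsfin hx)
    have h1 : φ 0 x t ∈ Vs := interior_subset hxt
    have h2 := hVs _ h1 (T - t) (by
      have := hT₀ t hts
      have := le_max_left T₀ (0:ℝ)
      linarith)
    rwa [hflow0.2.2, add_sub_cancel] at h2
  -- a bound for the transient
  obtain ⟨rM, hrM⟩ := ((hB₀cpt.prod (isCompact_Icc (a := (0:ℝ)) (b := T))).image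
    hflow0.1).isBounded.subset_closedBall 0
  set r₁ : ℝ := max rM r₀ + 1 with hr₁
  have hr₁pos : 0 < r₁ := by positivity
  have hr₀r₁ : r₀ ≤ r₁ := by
    have := le_max_right rM r₀
    linarith
  -- tube lemma (b) : φ l x T ∈ ball 0 r₀ for small l
  have hgcont : Continuous (fun q : ℝ × (EuclideanSpace ℝ (Fin n)) =>
      φ (min 1 (max 0 q.1)) q.2 T) :=
    hcont_glob.comp ((continuous_fst).prodMk ((continuous_snd).prodMk continuous_const))
  obtain ⟨u1, v1, hu1o, _, hu1mem, hv1B, huv1⟩ :=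
    generalized_tube_lemma (isCompact_singleton : IsCompact ({(0:ℝ)} : Set ℝ)) hB₀cpt
      (hgcont.isOpen_preimage (ball 0 r₀) isOpen_ball)
      (by
        rintro ⟨a, x⟩ ⟨ha, hx⟩
        have ha' : a = 0 := Set.mem_singleton_iff.mp ha
        simp only [Set.mem_preimage]
        rw [ha', hclamp0]
        exact hTenter x hx)
  obtain ⟨δb, hδb0, hδbsub⟩ := Metric.isOpen_iff.mp hu1o 0 (hu1mem rfl)
  have hb : ∀ l : ℝ, l ∈ Icc (0:ℝ) 1 → l < δb → ∀ x ∈ B₀,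
      φ l x T ∈ ball (0 : EuclideanSpace ℝ (Fin n)) r₀ := by
    intro l hl hlδ x hx
    have hlmem : l ∈ u1 := hδbsub (by
      rw [mem_ball, Real.dist_eq, sub_zero, abs_of_nonneg hl.1]
      exact hlδ)
    have := huv1 (Set.mk_mem_prod hlmem (hv1B hx))
    simpa [Set.mem_preimage, hclamp l hl] using this
  -- tube lemma (a) : the whole transient stays in ball 0 r₁ for small l
  obtain ⟨u2, v2, hu2o, _, hu2mem, hv2B, huv2⟩ :=
    generalized_tube_lemma (isCompact_singleton : IsCompact ({(0:ℝ)} : Set ℝ))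
      (hB₀cpt.prod (isCompact_Icc (a := (0:ℝ)) (b := T)))
      (hcont_glob.isOpen_preimage (ball 0 r₁) isOpen_ball)
      (by
        rintro ⟨a, x, t⟩ ⟨ha, hx, ht⟩
        have ha' : a = 0 := Set.mem_singleton_iff.mp ha
        simp only [Set.mem_preimage]
        rw [ha', hclamp0]
        have : φ 0 x t ∈ closedBall (0 : EuclideanSpace ℝ (Fin n)) rM :=
          hrM ⟨(x, t), ⟨hx, ht⟩, rfl⟩
        rw [mem_ball_zero_iff]
        have h1 := mem_closedBall_zero_iff.mp this
        have := le_max_left rM r₀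
        linarith)
  obtain ⟨δa, hδa0, hδasub⟩ := Metric.isOpen_iff.mp hu2o 0 (hu2mem rfl)
  have ha : ∀ l : ℝ, l ∈ Icc (0:ℝ) 1 → l < δa → ∀ x ∈ B₀, ∀ t ∈ Icc (0:ℝ) T,
      φ l x t ∈ ball (0 : EuclideanSpace ℝ (Fin n)) r₁ := by
    intro l hl hlδ x hx t ht
    have hlmem : l ∈ u2 := hδasub (by
      rw [mem_ball, Real.dist_eq, sub_zero, abs_of_nonneg hl.1]
      exact hlδ)
    have := huv2 (Set.mk_mem_prod hlmem (hv2B (Set.mk_mem_prod hx ht)))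
    simpa [Set.mem_preimage, hclamp l hl] using this
  -- continuation and coercivity data
  obtain ⟨δ₁, hδ₁0, hδ₁⟩ := hcont.2 0 ⟨le_refl 0, hlam1pos.le⟩ (closedBall 0 r₀)
    (hballiso r₀ (le_refl _))
  obtain ⟨δ₂, hδ₂0, hδ₂⟩ := hcont.2 0 ⟨le_refl 0, hlam1pos.le⟩ (closedBall 0 r₁)
    (hballiso r₁ hr₀r₁)
  obtain ⟨lamc, hlamc0, hlamc1, hlamcbd⟩ := hcoer lam1 ⟨hlam1pos, hlam11⟩ K hcont hK0
  refine ⟨min (min δ₁ δ₂) (min (min δa δb) (min lamc lam1)), by positivity, ?_, ?_⟩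
  · exact le_trans (min_le_right _ _) (le_trans (min_le_right _ _) (min_le_right _ _))
  intro l hl0 hllam0
  have hlδ₁ : l < δ₁ := lt_of_lt_of_le hllam0 (le_trans (min_le_left _ _) (min_le_left _ _))
  have hlδ₂ : l < δ₂ := lt_of_lt_of_le hllam0 (le_trans (min_le_left _ _) (min_le_right _ _))
  have hlδa : l < δa := lt_of_lt_of_le hllam0
    (le_trans (min_le_right _ _) (le_trans (min_le_left _ _) (min_le_left _ _)))
  have hlδb : l < δb := lt_of_lt_of_le hllam0
    (le_trans (min_le_right _ _) (le_trans (min_le_left _ _) (min_le_right _ _)))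
  have hllamc : l < lamc := lt_of_lt_of_le hllam0
    (le_trans (min_le_right _ _) (le_trans (min_le_right _ _) (min_le_left _ _)))
  have hllam1 : l < lam1 := lt_of_lt_of_le hllam0
    (le_trans (min_le_right _ _) (le_trans (min_le_right _ _) (min_le_right _ _)))
  have hl1 : l ≤ 1 := le_trans hllam1.le hlam11
  have hlIcc : l ∈ Icc (0:ℝ) 1 := ⟨hl0.le, hl1⟩
  have hlIcc1 : l ∈ Icc (0:ℝ) lam1 := ⟨hl0.le, hllam1.le⟩
  have habs : |l - 0| = l := by rw [sub_zero, abs_of_nonneg hl0.le]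
  have hflowl : IsFlow (φ l) := hφ.2 l hlIcc
  have iso₁ : IsIsolatingNbhd (φ l) (closedBall 0 r₀) (K l) := hδ₁ l hlIcc1 (by rw [habs]; exact hlδ₁)
  have iso₂ : IsIsolatingNbhd (φ l) (closedBall 0 r₁) (K l) := hδ₂ l hlIcc1 (by rw [habs]; exact hlδ₂)
  have hattrl := hattr l ⟨hl0, hllam1.le⟩
  have hKlcpt : IsCompact (K l) := hattrl.1
  have hKlA : attractionRegion (φ l) (K l) ∈ nhdsSet (K l) := hattrl.2.2.2
  have hAbd : IsBounded (attractionRegion (φ l) (K l)) := hlamcbd l hl0 hllamc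
  have hdissl : Dissipative (φ l) := hdiss l hlIcc
  -- the positively invariant connected compact set Dl
  have hstep : ∀ x ∈ B₀, φ l x T ∈ B₀ := fun x hx =>
    ball_subset_closedBall (hb l hlIcc hlδb x hx)
  have hiter : ∀ k : ℕ, ∀ x ∈ B₀, φ l x (k * T) ∈ B₀ := by
    intro k
    induction k with
    | zero =>
      intro x hx
      simpa [hflowl.2.1] using hx
    | succ k ih =>
      intro x hx
      have h1 := hstep _ (ih x hx)
      rw [hflowl.2.2] at h1
      have heq : (k : ℝ) * T + T = ((k + 1 : ℕ) : ℝ) * T := by push_cast; ring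
      rwa [heq] at h1
  have horbball : ∀ x ∈ B₀, ∀ t : ℝ, 0 ≤ t →
      φ l x t ∈ ball (0 : EuclideanSpace ℝ (Fin n)) r₁ := by
    intro x hx t ht
    set k := ⌊t / T⌋₊ with hk
    have hk1 : (k : ℝ) ≤ t / T := Nat.floor_le (div_nonneg ht hTpos.le)
    have hk2 : t / T < (k : ℝ) + 1 := Nat.lt_floor_add_one _
    have hkT : (k : ℝ) * T ≤ t := by
      rw [← le_div_iff₀ hTpos]
      exact hk1
    have htk : t - (k : ℝ) * T < T := by
      have := (div_lt_iff₀ hTpos).mp hk2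
      linarith [this]
    have h1 := ha l hlIcc hlδa (φ l x ((k:ℝ) * T)) (hiter k x hx) (t - (k:ℝ) * T)
      ⟨by linarith, by linarith⟩
    rwa [hflowl.2.2, add_sub_cancel] at h1
  set Orb := (fun p : (EuclideanSpace ℝ (Fin n)) × ℝ => φ l p.1 p.2) '' (B₀ ×ˢ Ici 0) with hOrb
  have hOrbsub : Orb ⊆ ball (0 : EuclideanSpace ℝ (Fin n)) r₁ := by
    rintro z ⟨⟨x, t⟩, ⟨hx, ht⟩, rfl⟩
    exact horbball x hx t ht
  set Dl := closure Orb with hDl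
  have hDlsub : Dl ⊆ closedBall 0 r₁ :=
    closure_minimal (hOrbsub.trans ball_subset_closedBall) Metric.isClosed_closedBall
  have hDlcl : IsClosed Dl := isClosed_closure
  have hDlconn : IsConnected Dl := by
    refine IsConnected.closure ?_
    refine IsConnected.image ?_ _ hflowl.1.continuousOn
    refine IsConnected.prod ⟨⟨0, mem_closedBall_self hr₀pos.le⟩, (convex_closedBall _ _).isPreconnected⟩
      isConnected_Ici
  have hOrbpos : ∀ t : ℝ, 0 ≤ t → (fun y => φ l y t) '' Orb ⊆ Orb := by
    intro t ht
    rintro z ⟨w, ⟨⟨b, u⟩, ⟨hb, hu⟩, rfl⟩, rfl⟩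
    have hu' : (0:ℝ) ≤ u := hu
    exact ⟨(b, u + t), ⟨hb, Set.mem_Ici.mpr (add_nonneg hu' ht)⟩, (hflowl.2.2 b u t).symm⟩
  have hDlpos : ∀ x ∈ Dl, ∀ t : ℝ, 0 ≤ t → φ l x t ∈ Dl := by
    intro x hx t ht
    have h1 : φ l x t ∈ closure ((fun y => φ l y t) '' Orb) :=
      image_closure_subset_closure_image (FlowAux.cont_t hflowl t) ⟨x, hx, rfl⟩
    exact closure_mono (hOrbpos t ht) h1
  have hKlD : K l ⊆ interior Dl := by
    have h1 : K l ⊆ ball 0 r₀ := by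
      have h2 := iso₁.2.1
      rwa [interior_closedBall (0 : EuclideanSpace ℝ (Fin n)) (ne_of_gt hr₀pos)] at h2
    have h2 : ball (0 : EuclideanSpace ℝ (Fin n)) r₀ ⊆ Dl := by
      intro x hx
      exact subset_closure ⟨(x, 0), ⟨ball_subset_closedBall hx, Set.mem_Ici.mpr (le_refl 0)⟩, hflowl.2.1 x⟩
    exact h1.trans (interior_maximal h2 isOpen_ball)
  have hmain := FlowAux.main_single hflowl hrank hdissl hKlcpt hKlA hAbd hDlcl hDlconn
    hDlpos hKlD hDlsub iso₂.2.2.2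
  simpa [complementarySet, escapeRegion] using hmain
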